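/- Let G be an additive commutative group and φ : G → ℝ/ℤ an additive group homomorphism such that (i) every element of the range of φ has finite additive order (i.e. the range of φ lies in the canonical copy of ℚ/ℤ inside ℝ/ℤ), and (ii) for every ε > 0 there exists g ∈ G with φ(g) ≠ 0 and ‖φ(g)‖ < ε. Then G is not finitely generated as an additive group. (This is the algebraic–topological core of Theorem 1.1: if a group admits a homomorphism into ℚ/ℤ taking nonzero values arbitrarily close to 0, then the group is infinitely generated.) -/

import Mathlib

theorem stmt_0 (G : Type*) [AddCommGroup G] (φ : G →+ AddCircle (1 : ℝ))
    (hfin : ∀ g : G, IsOfFinAddOrder (φ g))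
    (hsmall : ∀ ε : ℝ, 0 < ε → ∃ g : G, φ g ≠ 0 ∧ ‖φ g‖ < ε) :
    ¬ AddGroup.FG G := by
  intro hFG
  -- the range of φ is a finitely generated torsion group, hence finite
  have hrangeFG : AddGroup.FG φ.range :=
    AddGroup.fg_of_surjective (f := φ.rangeRestrict) φ.rangeRestrict_surjective
  have htor : AddMonoid.IsTorsion φ.range := by
    rintro ⟨x, g, rfl⟩
    obtain ⟨n, hn, hng⟩ := (isOfFinAddOrder_iff_nsmul_eq_zero).1 (hfin g)
    exact (isOfFinAddOrder_iff_nsmul_eq_zero).2 ⟨n, hn, Subtype.ext (by simpa using hng)⟩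
  have hfinite : Finite φ.range := AddCommGroup.finite_of_fg_torsion _ htor
  set S : Set (AddCircle (1 : ℝ)) := {x | x ∈ φ.range ∧ x ≠ 0} with hS
  have hSfin : S.Finite := by
    have : (φ.range : Set (AddCircle (1:ℝ))).Finite := @Set.toFinite _ (φ.range : Set (AddCircle (1:ℝ))) hfinite
    exact this.subset fun x hx => hx.1
  obtain ⟨g₀, hg₀, _⟩ := hsmall 1 one_pos
  have hSne : S.Nonempty := ⟨φ g₀, ⟨g₀, rfl⟩, hg₀⟩
  set T : Finset ℝ := hSfin.toFinset.image (fun x => ‖x‖) with hT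
  have hTne : T.Nonempty := by
    refine Finset.image_nonempty.2 ?_
    rwa [Set.Finite.toFinset_nonempty]
  set ε : ℝ := T.min' hTne with hε
  have hεpos : 0 < ε := by
    obtain ⟨x, hx, hxe⟩ := Finset.mem_image.1 (T.min'_mem hTne)
    rw [Set.Finite.mem_toFinset] at hx
    have : 0 < ‖x‖ := norm_pos_iff.2 hx.2
    rw [hε, ← hxe]
    exact this
  obtain ⟨g, hgne, hglt⟩ := hsmall ε hεpos
  have : ε ≤ ‖φ g‖ := by
    apply T.min'_le
    exact Finset.mem_image.2 ⟨φ g, (Set.Finite.mem_toFinset _).2 ⟨⟨g, rfl⟩, hgne⟩, rfl⟩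
  linarith
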